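/- Let N > J ≥ 1, let g₁, …, g_J ∈ ℂ^N be linearly independent, and let E : ℂ^{N−J} → ℂ^N be a linear isometry whose range equals {w ∈ ℂ^N : ⟨g_j, w⟩ = 0 for all j = 1, …, J}. Let h ∈ ℂ^N, h₀ ∈ ℂ, g_{01}, …, g_{0J} ∈ ℂ, σ > 0, and 0 ≤ P_min ≤ P₀. Define f₂(P_s) = (σ² + P_s|h₀|² + (P₀ − P_s)‖E† h‖²)/(σ² + P_s · max_{1≤j≤J} |g_{0j}|²), where E† is the adjoint of E. Then the supremum, over P_s ∈ [P_min, P₀] and w ∈ ℂ^N with ‖w‖² = P₀ − P_s and ⟨g_j, w⟩ = 0 for all j, of (σ² + P_s|h₀|² + |⟨h, w⟩|²)/(σ² + P_s · max_{1≤j≤J} |g_{0j}|²) equals max{f₂(P_min), f₂(P₀)}, and it is attained. -/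

import Mathlib

/-- A fractional-linear function on an interval is maximized at an endpoint. -/
lemma frac_max (a b c d p q t : ℝ) (hpt : p ≤ t) (htq : t ≤ q)
    (hcp : 0 < c + d * p) (hct : 0 < c + d * t) (hcq : 0 < c + d * q) :
    (a + b * t) / (c + d * t) ≤
      max ((a + b * p) / (c + d * p)) ((a + b * q) / (c + d * q)) := by
  rcases le_total (b * c) (a * d) with hbc | hbc
  · refine le_max_of_le_left ?_
    rw [div_le_div_iff₀ hct hcp]
    nlinarith [mul_nonneg (sub_nonneg.mpr hpt) (sub_nonneg.mpr hbc)]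
  · refine le_max_of_le_right ?_
    rw [div_le_div_iff₀ hct hcq]
    nlinarith [mul_nonneg (sub_nonneg.mpr htq) (sub_nonneg.mpr hbc)]

theorem stmt12 {N J : ℕ} (hJ : 1 ≤ J) (hNJ : J < N)
    (g : Fin J → EuclideanSpace ℂ (Fin N)) (hg : LinearIndependent ℂ g)
    (E : EuclideanSpace ℂ (Fin (N - J)) →ₗᵢ[ℂ] EuclideanSpace ℂ (Fin N))
    (hE : Set.range (⇑E) =
      {w : EuclideanSpace ℂ (Fin N) | ∀ j, (inner ℂ (g j) w : ℂ) = 0})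
    (h : EuclideanSpace ℂ (Fin N)) (h₀ : ℂ) (g₀ : Fin J → ℂ)
    (σ Pmin P₀ : ℝ) (hσ : 0 < σ) (hPmin : 0 ≤ Pmin) (hP : Pmin ≤ P₀)
    (f₂ : ℝ → ℝ)
    (hf₂ : ∀ Ps, f₂ Ps =
      (σ ^ 2 + Ps * ‖h₀‖ ^ 2 +
        (P₀ - Ps) * ‖LinearMap.adjoint E.toLinearMap h‖ ^ 2) /
      (σ ^ 2 + Ps * ⨆ j, ‖g₀ j‖ ^ 2)) :
    IsGreatest {v : ℝ | ∃ Ps ∈ Set.Icc Pmin P₀, ∃ w : EuclideanSpace ℂ (Fin N),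
        ‖w‖ ^ 2 = P₀ - Ps ∧ (∀ j, (inner ℂ (g j) w : ℂ) = 0) ∧
        v = (σ ^ 2 + Ps * ‖h₀‖ ^ 2 + ‖(inner ℂ h w : ℂ)‖ ^ 2) /
            (σ ^ 2 + Ps * ⨆ j, ‖g₀ j‖ ^ 2)}
      (max (f₂ Pmin) (f₂ P₀)) := by
  set A : EuclideanSpace ℂ (Fin (N - J)) := LinearMap.adjoint E.toLinearMap h with hA
  set M : ℝ := ⨆ j, ‖g₀ j‖ ^ 2 with hMdef
  have hJne : Nonempty (Fin J) := ⟨⟨0, hJ⟩⟩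
  have hM0 : 0 ≤ M :=
    le_trans (by positivity) (le_ciSup (Set.Finite.bddAbove (Set.finite_range _))
      (⟨0, hJ⟩ : Fin J))
  have hden : ∀ t : ℝ, 0 ≤ t → 0 < σ ^ 2 + t * M := by
    intro t ht; nlinarith
  have key : ∀ u : EuclideanSpace ℂ (Fin (N - J)),
      (inner ℂ h (E u) : ℂ) = inner ℂ A u := fun u =>
    (LinearMap.adjoint_inner_left E.toLinearMap u h).symm
  -- every w satisfying the nulling constraints is in the range of E
  have hrange : ∀ w : EuclideanSpace ℂ (Fin N),
      (∀ j, (inner ℂ (g j) w : ℂ) = 0) → ∃ u, E u = w := by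
    intro w hw
    have : w ∈ Set.range (⇑E) := by rw [hE]; exact hw
    exact this
  -- f₂ Ps is attained for each Ps in [Pmin, P₀]
  have hmem : ∀ Ps ∈ Set.Icc Pmin P₀, f₂ Ps ∈
      {v : ℝ | ∃ Ps ∈ Set.Icc Pmin P₀, ∃ w : EuclideanSpace ℂ (Fin N),
        ‖w‖ ^ 2 = P₀ - Ps ∧ (∀ j, (inner ℂ (g j) w : ℂ) = 0) ∧
        v = (σ ^ 2 + Ps * ‖h₀‖ ^ 2 + ‖(inner ℂ h w : ℂ)‖ ^ 2) /
            (σ ^ 2 + Ps * M)} := by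
    intro Ps hPs
    have hps0 : 0 ≤ P₀ - Ps := sub_nonneg.mpr hPs.2
    set c : ℝ := Real.sqrt (P₀ - Ps) with hc
    have hc0 : 0 ≤ c := Real.sqrt_nonneg _
    have hc2 : c ^ 2 = P₀ - Ps := Real.sq_sqrt hps0
    by_cases hA0 : A = 0
    · -- E†h = 0 : any feasible w works
      have hi0 : 0 < N - J := Nat.sub_pos_of_lt hNJ
      set u : EuclideanSpace ℂ (Fin (N - J)) :=
        (c : ℂ) • EuclideanSpace.single ⟨0, hi0⟩ (1 : ℂ) with hu
      refine ⟨Ps, hPs, E u, ?_, ?_, ?_⟩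
      · rw [E.norm_map, hu, norm_smul, EuclideanSpace.norm_single]
        simp [abs_of_nonneg hc0, hc2]
      · intro j
        have : E u ∈ Set.range (⇑E) := ⟨u, rfl⟩
        rw [hE] at this; exact this j
      · have h1 : (inner ℂ h (E u) : ℂ) = 0 := by rw [key, hA0, inner_zero_left]
        rw [hf₂, h1, hA0]
        simp
    · -- E†h ≠ 0 : take w = (c/‖A‖) • E A
      have hAn : (0:ℝ) < ‖A‖ := norm_pos_iff.mpr hA0
      set u : EuclideanSpace ℂ (Fin (N - J)) := ((c / ‖A‖ : ℝ) : ℂ) • A with hu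
      refine ⟨Ps, hPs, E u, ?_, ?_, ?_⟩
      · rw [E.norm_map, hu, norm_smul]
        have : ‖((c / ‖A‖ : ℝ) : ℂ)‖ = c / ‖A‖ := by
          rw [Complex.norm_real, Real.norm_eq_abs, abs_of_nonneg (by positivity)]
        rw [this]
        field_simp
        exact hc2
      · intro j
        have : E u ∈ Set.range (⇑E) := ⟨u, rfl⟩
        rw [hE] at this; exact this j
      · have h1 : (inner ℂ h (E u) : ℂ) = ((c / ‖A‖ : ℝ) : ℂ) * ((‖A‖ : ℂ)) ^ 2 := by
          rw [key, hu, inner_smul_right, inner_self_eq_norm_sq_to_K]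
          norm_num
        have h2 : ‖(inner ℂ h (E u) : ℂ)‖ ^ 2 = (P₀ - Ps) * ‖A‖ ^ 2 := by
          rw [h1]
          rw [norm_mul, norm_pow]
          simp only [Complex.norm_real, Real.norm_eq_abs]
          rw [abs_of_nonneg (by positivity : (0:ℝ) ≤ c / ‖A‖),
            abs_of_nonneg (norm_nonneg A)]
          field_simp
          rw [← hc2]
        rw [hf₂, h2]
    -- end hmem
  constructor
  · -- membership : the max is f₂ Pmin or f₂ P₀, both attained
    have h1 := hmem Pmin ⟨le_refl _, hP⟩
    have h2 := hmem P₀ ⟨hP, le_refl _⟩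
    rcases max_cases (f₂ Pmin) (f₂ P₀) with ⟨heq, _⟩ | ⟨heq, _⟩ <;> rw [heq]
    · exact h1
    · exact h2
  · -- upper bound
    rintro v ⟨Ps, hPs, w, hw, hnull, rfl⟩
    have hPs0 : 0 ≤ Ps := le_trans hPmin hPs.1
    have hdt := hden Ps hPs0
    have hdp := hden Pmin hPmin
    have hdq := hden P₀ (le_trans hPmin hP)
    obtain ⟨u, rfl⟩ := hrange w hnull
    -- Cauchy–Schwarz bound
    have hcs : ‖(inner ℂ h (E u) : ℂ)‖ ^ 2 ≤ (P₀ - Ps) * ‖A‖ ^ 2 := by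
      have h1 : ‖(inner ℂ h (E u) : ℂ)‖ = ‖(inner ℂ A u : ℂ)‖ := by
        rw [key]
      have h2 : ‖(inner ℂ A u : ℂ)‖ ≤ ‖A‖ * ‖u‖ := norm_inner_le_norm A u
      have h3 : ‖u‖ ^ 2 = P₀ - Ps := by rw [← E.norm_map u]; exact hw
      calc ‖(inner ℂ h (E u) : ℂ)‖ ^ 2
          ≤ (‖A‖ * ‖u‖) ^ 2 := by
            rw [h1]; exact pow_le_pow_left₀ (norm_nonneg _) h2 2
        _ = (P₀ - Ps) * ‖A‖ ^ 2 := by rw [mul_pow, h3]; ring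
    have step1 : (σ ^ 2 + Ps * ‖h₀‖ ^ 2 +
          ‖(inner ℂ h (E u) : ℂ)‖ ^ 2) / (σ ^ 2 + Ps * M) ≤ f₂ Ps := by
      rw [hf₂]
      gcongr
    refine le_trans step1 ?_
    -- fractional linear maximization
    have hform : ∀ t : ℝ, f₂ t =
        ((σ ^ 2 + P₀ * ‖A‖ ^ 2) + (‖h₀‖ ^ 2 - ‖A‖ ^ 2) * t) /
          (σ ^ 2 + M * t) := by
      intro t; rw [hf₂]; congr 1 <;> ring
    rw [hform Ps, hform Pmin, hform P₀]
    exact frac_max _ _ _ _ _ _ _ hPs.1 hPs.2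
      (by rw [mul_comm]; exact hdp) (by rw [mul_comm]; exact hdt)
      (by rw [mul_comm]; exact hdq)
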